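/- Let q be a prime power, let X be the uniform distribution on a k-dimensional affine subspace of F_q^n, let f : F_q^n → F_q^m be an F_q-linear map, and let Y be the distribution of f(X) for X drawn from X. Let 0 ≤ ε < 1/2. Then: (i) if Y is ε-close to the uniform distribution on F_q^m, then Y is exactly the uniform distribution on F_q^m; and (ii) if, for an integer k', Y is ε-close to some distribution with min-entropy at least k'·log₂ q, then Y itself has min-entropy at least k'·log₂ q. -/

import Mathlib

/-- Statistical distance between two distributions on a finite set. -/
noncomputable def statDist {Ω : Type*} [Fintype Ω] (p q : Ω → ℝ) : ℝ :=
  (∑ x, |p x - q x|) / 2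

/-- `p` is a probability distribution on a finite set. -/
def IsDist {Ω : Type*} [Fintype Ω] (p : Ω → ℝ) : Prop :=
  (∀ x, 0 ≤ p x) ∧ (∑ x, p x) = 1

/-- `p` has min-entropy at least `b` (bits). -/
def minEntropyGe {Ω : Type*} [Fintype Ω] (p : Ω → ℝ) (b : ℝ) : Prop :=
  ∀ x, p x ≤ (2 : ℝ) ^ (-b)

/-- Push-forward distribution of `p` along `f`. -/
noncomputable def pushforward {Ω Γ : Type*} [Fintype Ω] [DecidableEq Γ]
    (f : Ω → Γ) (p : Ω → ℝ) : Γ → ℝ :=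
  fun y => ∑ x, if f x = y then p x else 0

/-- The uniform distribution on a finite type. -/
noncomputable def unif (Ω : Type*) [Fintype Ω] : Ω → ℝ :=
  fun _ => (Fintype.card Ω : ℝ)⁻¹

open Classical in
/-- A linear map applied to an affine source attains either zero or
large error, both as a condenser to full entropy and to any given entropy. -/
theorem stmt8 {F : Type*} [Field F] [Fintype F] [DecidableEq F]
    (n m k : ℕ) (W : Submodule F (Fin n → F)) (hW : Module.finrank F W = k)
    (a : Fin n → F) (f : (Fin n → F) →ₗ[F] (Fin m → F))
    (p : (Fin n → F) → ℝ)
    (hp : ∀ v, p v = if v - a ∈ W then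
        ((Finset.univ.filter (fun u : Fin n → F => u - a ∈ W)).card : ℝ)⁻¹ else 0)
    (ε : ℝ) (hε : 0 ≤ ε) (hε2 : ε < 1 / 2) :
    (statDist (pushforward f p) (unif (Fin m → F)) ≤ ε →
      pushforward f p = unif (Fin m → F)) ∧
    (∀ k' : ℕ,
      (∃ q : (Fin m → F) → ℝ, IsDist q ∧
        minEntropyGe q ((k' : ℝ) * Real.logb 2 (Fintype.card F)) ∧
        statDist (pushforward f p) q ≤ ε) →
      minEntropyGe (pushforward f p) ((k' : ℝ) * Real.logb 2 (Fintype.card F))) := by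
  classical
  set q := Fintype.card F with hq
  have hq2 : 2 ≤ q := Fintype.one_lt_card
  have hqR : (0:ℝ) < (q:ℝ) := by positivity
  have hqR2 : (2:ℝ) ≤ (q:ℝ) := by exact_mod_cast hq2
  set T : Finset (Fin n → F) := Finset.univ.filter (fun u => u - a ∈ W) with hT
  have haT : a ∈ T := by simp [hT, sub_self, W.zero_mem]
  have hTcard : (0:ℝ) < (T.card : ℝ) := by
    have := Finset.card_pos.mpr ⟨a, haT⟩
    exact_mod_cast this
  -- p is nonnegative and has sum 1
  have hp0 : ∀ v, 0 ≤ p v := by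
    intro v; rw [hp v]
    split
    · positivity
    · exact le_rfl
  have hpsum : ∑ v, p v = 1 := by
    have h1 : ∑ v, p v = ∑ v ∈ T, ((T.card : ℝ))⁻¹ := by
      rw [hT, Finset.sum_filter]
      exact Finset.sum_congr rfl fun v _ => (hp v)
    rw [h1, Finset.sum_const, nsmul_eq_mul, mul_inv_cancel₀ hTcard.ne']
  set p' := pushforward f p with hp'
  have hp'0 : ∀ y, 0 ≤ p' y := by
    intro y
    apply Finset.sum_nonneg
    intro x _
    split
    · exact hp0 x
    · exact le_rfl
  have hp'sum : ∑ y, p' y = 1 := by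
    rw [hp']
    show (∑ y, ∑ x, if f x = y then p x else 0) = 1
    rw [Finset.sum_comm]
    rw [← hpsum]
    refine Finset.sum_congr rfl fun x _ => ?_
    simp [Finset.sum_ite_eq]
  set S : Finset (Fin m → F) := Finset.univ.filter (fun y => y - f a ∈ W.map f) with hS
  have hfaS : f a ∈ S := by
    simp only [hS, Finset.mem_filter, Finset.mem_univ, true_and, sub_self]
    exact Submodule.zero_mem _
  -- p' vanishes off S
  have h_out : ∀ y ∉ S, p' y = 0 := by
    intro y hy
    apply Finset.sum_eq_zero
    intro x _
    split_ifs with hfx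
    · rw [hp x]
      split_ifs with hxa
      · exact absurd (by
          simp only [hS, Finset.mem_filter, Finset.mem_univ, true_and]
          exact ⟨x - a, hxa, by rw [map_sub, hfx]⟩) hy
      · rfl
    · rfl
  -- p' is constant on S
  have h_const : ∀ y ∈ S, p' y = p' (f a) := by
    intro y hy
    simp only [hS, Finset.mem_filter, Finset.mem_univ, true_and,
      Submodule.mem_map] at hy
    obtain ⟨w, hwW, hfw⟩ := hy
    have haux : ∀ x, p (x + w) = p x := by
      intro x
      rw [hp (x + w), hp x]
      have hiff : x + w - a ∈ W ↔ x - a ∈ W := by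
        constructor
        · intro h
          have := W.sub_mem h hwW
          simpa [add_sub_right_comm] using this
        · intro h
          have := W.add_mem h hwW
          simpa [add_sub_right_comm] using this
      simp [hiff]
    have hcond : ∀ x, (f x + (y - f a) = y) ↔ f x = f a := by
      intro x
      rw [← eq_sub_iff_add_eq, sub_sub_cancel]
    symm
    calc p' (f a) = ∑ x, if f x = f a then p x else 0 := rfl
      _ = ∑ x, if f x = y then p x else 0 := by
          refine Fintype.sum_equiv (Equiv.addRight w) _ _ fun x => ?_
          simp only [Equiv.coe_addRight, map_add, hfw, hcond x, haux]
      _ = p' y := rfl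
  -- value of p' on S
  have hsum_S : ∑ y ∈ S, p' y = 1 := by
    rw [← hp'sum, ← Finset.sum_add_sum_compl S p', left_eq_add]
    exact Finset.sum_eq_zero fun y hy => h_out y (by simpa using hy)
  have hScard : (0:ℝ) < (S.card : ℝ) := by
    have := Finset.card_pos.mpr ⟨f a, hfaS⟩
    exact_mod_cast this
  have h_val : ∀ y ∈ S, p' y = ((S.card : ℝ))⁻¹ := by
    have hc : (S.card : ℝ) * p' (f a) = 1 := by
      rw [← hsum_S]
      rw [Finset.sum_congr rfl h_const, Finset.sum_const, nsmul_eq_mul]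
    intro y hy
    rw [h_const y hy]
    field_simp at hc ⊢
    linarith [hc]
  -- S has cardinality a power of q
  have hSim : S = ((W.map f : Set (Fin m → F)).toFinset).image (· + f a) := by
    ext y
    simp only [hS, Finset.mem_filter, Finset.mem_univ, true_and, Finset.mem_image,
      Set.mem_toFinset, SetLike.mem_coe]
    constructor
    · intro h; exact ⟨y - f a, h, by abel⟩
    · rintro ⟨z, hz, rfl⟩; simpa using hz
  have hScard_pow : S.card = q ^ Module.finrank F (W.map f) := by
    rw [hSim, Finset.card_image_of_injective _ (add_left_injective (f a)),
      Set.toFinset_card]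
    exact Module.card_eq_pow_finrank
  -- key arithmetic step
  have step : ∀ t : ℕ, S.card < q ^ t → q * S.card ≤ q ^ t := by
    intro t h
    rw [hScard_pow] at h ⊢
    have hj : Module.finrank F (W.map f) < t := by
      exact (Nat.pow_lt_pow_iff_right (Nat.lt_of_lt_of_le Nat.one_lt_two hq2)).mp h
    calc q * q ^ Module.finrank F (W.map f) = q ^ (Module.finrank F (W.map f) + 1) := by
          ring
      _ ≤ q ^ t := Nat.pow_le_pow_right (by omega) (by omega)
  have frac : ∀ t : ℕ, q * S.card ≤ q ^ t →
      (S.card : ℝ) * (((q:ℝ)) ^ t)⁻¹ ≤ 1 / 2 := by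
    intro t h
    have hc : ((q:ℝ)) * (S.card : ℝ) ≤ (q:ℝ) ^ t := by exact_mod_cast h
    have hqt : (0:ℝ) < (q:ℝ) ^ t := by positivity
    have h2 : 2 * (S.card:ℝ) ≤ (q:ℝ) * S.card :=
      mul_le_mul_of_nonneg_right hqR2 (le_of_lt hScard)
    rw [← div_eq_mul_inv, div_le_div_iff₀ hqt (by norm_num : (0:ℝ) < 2)]
    nlinarith [h2, hc]
  -- lower bound on statistical distance to any distribution r
  have lower : ∀ r : (Fin m → F) → ℝ, (∀ y, 0 ≤ r y) → (∑ y, r y) = 1 →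
      1 - ∑ y ∈ S, r y ≤ statDist p' r := by
    intro r hr0 hrsum
    have h1 : ∑ y ∈ S, (p' y - r y) ≤ ∑ y ∈ S, |p' y - r y| :=
      Finset.sum_le_sum fun y _ => le_abs_self _
    have h2 : ∑ y ∈ Sᶜ, (r y - p' y) ≤ ∑ y ∈ Sᶜ, |p' y - r y| :=
      Finset.sum_le_sum fun y _ => by rw [abs_sub_comm]; exact le_abs_self _
    have hsplit : ∑ y, |p' y - r y| = ∑ y ∈ S, |p' y - r y| + ∑ y ∈ Sᶜ, |p' y - r y| :=
      (Finset.sum_add_sum_compl S _).symm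
    have hrsplit : ∑ y ∈ S, r y + ∑ y ∈ Sᶜ, r y = 1 := by
      rw [Finset.sum_add_sum_compl]; exact hrsum
    have hp'c : ∑ y ∈ Sᶜ, p' y = 0 :=
      Finset.sum_eq_zero fun y hy => h_out y (by simpa using hy)
    have hS1 : ∑ y ∈ S, (p' y - r y) = 1 - ∑ y ∈ S, r y := by
      rw [Finset.sum_sub_distrib, hsum_S]
    have hS2 : ∑ y ∈ Sᶜ, (r y - p' y) = ∑ y ∈ Sᶜ, r y := by
      rw [Finset.sum_sub_distrib, hp'c, sub_zero]
    rw [statDist, hsplit]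
    nlinarith [h1, h2, hS1, hS2, hrsplit]
  constructor
  · -- part (i)
    intro hdist
    have hSuniv : S = Finset.univ := by
      by_contra hne
      have hlt : S.card < Fintype.card (Fin m → F) :=
        Finset.card_lt_card (Finset.ssubset_univ_iff.mpr hne)
      have hcardFm : Fintype.card (Fin m → F) = q ^ m := by
        rw [Fintype.card_fun, Fintype.card_fin]
      rw [hcardFm] at hlt
      have hstep := step m hlt
      have hb : ∑ y ∈ S, unif (Fin m → F) y ≤ 1 / 2 := by
        simp only [unif, hcardFm, Finset.sum_const, nsmul_eq_mul]
        have : ((q ^ m : ℕ) : ℝ) = (q:ℝ) ^ m := by push_cast; ring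
        rw [this]
        exact frac m hstep
      have := lower (unif (Fin m → F)) (fun y => by
        simp only [unif]; positivity) (by
        simp only [unif, Finset.sum_const, nsmul_eq_mul, hcardFm]
        have : ((q ^ m : ℕ) : ℝ) ≠ 0 := by positivity
        field_simp
        rw [Finset.card_univ, hcardFm])
      linarith [this, hb, hdist]
    funext y
    have hy : y ∈ S := hSuniv ▸ Finset.mem_univ y
    rw [h_val y hy, hSuniv]
    simp [unif, Finset.card_univ]
  · -- part (ii)
    intro k' ⟨r, ⟨hr0, hrsum⟩, hrent, hdist⟩
    have hρ : (2:ℝ) ^ (-((k':ℝ) * Real.logb 2 (q:ℝ))) = (((q:ℝ)) ^ (k':ℕ))⁻¹ := by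
      rw [Real.rpow_neg (by norm_num)]
      congr 1
      rw [mul_comm, Real.rpow_mul (by norm_num),
        Real.rpow_logb (by norm_num) (by norm_num) hqR, Real.rpow_natCast]
    have hkey : (q:ℕ) ^ k' ≤ S.card := by
      by_contra hlt
      push_neg at hlt
      have hstep := step k' hlt
      have hb : ∑ y ∈ S, r y ≤ 1 / 2 := by
        have h1 : ∑ y ∈ S, r y ≤ ∑ y ∈ S, (((q:ℝ)) ^ k')⁻¹ := by
          refine Finset.sum_le_sum fun y _ => ?_
          have := hrent y
          rwa [hρ] at this
        rw [Finset.sum_const, nsmul_eq_mul] at h1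
        have h2 : (S.card : ℝ) * (((q:ℝ)) ^ k')⁻¹ ≤ 1 / 2 := frac k' hstep
        linarith
      have := lower r hr0 hrsum
      linarith [this, hb, hdist]
    intro y
    rw [hρ]
    by_cases hy : y ∈ S
    · rw [h_val y hy]
      apply inv_anti₀ (by positivity)
      exact_mod_cast hkey
    · rw [h_out y hy]
      positivity
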